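/- Let γ > 0 and 0 < a < b < 1. Define S(u,v) = ∫_u^v e^{-1/z}·z/(1−z) dz and P(y) = S(a,y)/S(a,b) for y ∈ [a,b]. Then P(a) = 0, P(b) = 1, P is strictly increasing on [a,b], and for every y ∈ (a,b), P is twice differentiable at y with −γ y·P'(y) + γ y³(1−y)·P''(y) = 0. -/

import Mathlib

/-- Heterodyne scale density Q(z) = e^{-1/z}·z/(1−z). -/
noncomputable def Qhet (z : ℝ) : ℝ := Real.exp (-1 / z) * z / (1 - z)

/-- Heterodyne scale integral S(u,v) = ∫_u^v Q(z) dz. -/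
noncomputable def Shet (u v : ℝ) : ℝ := ∫ z in u..v, Qhet z

lemma Qhet_pos {z : ℝ} (h0 : 0 < z) (h1 : z < 1) : 0 < Qhet z :=
  div_pos (mul_pos (Real.exp_pos _) h0) (by linarith)

lemma Qhet_measurable : Measurable Qhet := by
  exact ((Real.measurable_exp.comp (measurable_const.div measurable_id)).mul measurable_id).div
    (measurable_const.sub measurable_id)

lemma Qhet_contAt {z : ℝ} (h0 : z ≠ 0) (h1 : z ≠ 1) : ContinuousAt Qhet z := by
  unfold Qhet
  apply ContinuousAt.div
  · exact (Real.continuous_exp.continuousAt.comp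
      (continuousAt_const.div continuousAt_id h0)).mul continuousAt_id
  · exact continuousAt_const.sub continuousAt_id
  · exact sub_ne_zero.mpr (Ne.symm h1)

lemma hasDerivAt_Qhet {z : ℝ} (h0 : z ≠ 0) (h1 : (1:ℝ) - z ≠ 0) :
    HasDerivAt Qhet
      (((Real.exp (-1 / z) * (z ^ 2)⁻¹ * z + Real.exp (-1 / z) * 1) * (1 - z)
          - Real.exp (-1 / z) * z * (-1)) / (1 - z) ^ 2) z := by
  have hd1 : HasDerivAt (fun t : ℝ => -1 / t) ((z ^ 2)⁻¹) z := by
    simpa [neg_div, one_div] using (hasDerivAt_inv h0).fun_neg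
  have hd2 : HasDerivAt (fun t : ℝ => Real.exp (-1 / t)) (Real.exp (-1 / z) * (z ^ 2)⁻¹) z :=
    (Real.hasDerivAt_exp (-1 / z)).comp z hd1
  have hd3 := hd2.mul (hasDerivAt_id z)
  have hd4 : HasDerivAt (fun t : ℝ => 1 - t) (-1) z := by
    simpa using (hasDerivAt_id z).const_sub 1
  exact hd3.div hd4 h1

theorem het_hit_prob (γ a b : ℝ) (hγ : 0 < γ) (ha : 0 < a) (hab : a < b)
    (hb : b < 1) :
    let P : ℝ → ℝ := fun y => Shet a y / Shet a b
    P a = 0 ∧ P b = 1 ∧ StrictMonoOn P (Set.Icc a b) ∧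
    ∀ y ∈ Set.Ioo a b, ∃ p' p'' : ℝ,
      HasDerivAt P p' y ∧ HasDerivAt (deriv P) p'' y ∧
      -γ * y * p' + γ * y ^ 3 * (1 - y) * p'' = 0 := by
  intro P
  -- integrability on subintervals of [a,b]
  have hIntSub : ∀ u v : ℝ, a ≤ u → u ≤ v → v ≤ b → IntervalIntegrable Qhet MeasureTheory.volume u v := by
    intro u v hu huv hv
    apply ContinuousOn.intervalIntegrable
    intro z hz
    rw [Set.uIcc_of_le huv] at hz
    exact (Qhet_contAt (by nlinarith [hz.1, hz.2] : z ≠ 0)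
      (by nlinarith [hz.1, hz.2] : z ≠ 1)).continuousWithinAt
  have hSposSub : ∀ u v : ℝ, a ≤ u → u < v → v ≤ b → 0 < Shet u v := by
    intro u v hu huv hv
    apply intervalIntegral.intervalIntegral_pos_of_pos_on (hIntSub u v hu huv.le hv)
    · intro z hz
      exact Qhet_pos (by linarith [hz.1]) (by linarith [hz.2])
    · exact huv
  have hS : 0 < Shet a b := hSposSub a b le_rfl hab le_rfl
  have hSne : Shet a b ≠ 0 := hS.ne'
  have hPa : P a = 0 := by simp [P, Shet]
  have hPb : P b = 1 := div_self hSne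
  refine ⟨hPa, hPb, ?_, ?_⟩
  · intro x hx y hy hxy
    have hadd : Shet a x + Shet x y = Shet a y :=
      intervalIntegral.integral_add_adjacent_intervals
        (hIntSub a x le_rfl hx.1 hx.2) (hIntSub x y hx.1 hxy.le hy.2)
    have hpos : 0 < Shet x y := hSposSub x y hx.1 hxy hy.2
    have : Shet a x < Shet a y := by linarith
    exact div_lt_div_of_pos_right this hS
  · intro y hy
    have h0 : y ≠ 0 := by linarith [hy.1]
    have h1 : (1:ℝ) - y ≠ 0 := by nlinarith [hy.2]
    have hDat : ∀ t ∈ Set.Ioo a b, HasDerivAt P (Qhet t / Shet a b) t := by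
      intro t ht
      have hF : HasDerivAt (fun s => Shet a s) (Qhet t) t := by
        apply intervalIntegral.integral_hasDerivAt_right
          (hIntSub a t le_rfl ht.1.le ht.2.le)
        · exact Qhet_measurable.stronglyMeasurable.stronglyMeasurableAtFilter
        · exact Qhet_contAt (by linarith [ht.1]) (by nlinarith [ht.2])
      exact hF.div_const _
    have hP' := hDat y hy
    have hev : (fun t => Qhet t / Shet a b) =ᶠ[nhds y] deriv P := by
      filter_upwards [Ioo_mem_nhds hy.1 hy.2] with t ht
      exact ((hDat t ht).deriv).symm
    have hQ' := hasDerivAt_Qhet h0 h1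
    have hP'' : HasDerivAt (deriv P)
        ((((Real.exp (-1 / y) * (y ^ 2)⁻¹ * y + Real.exp (-1 / y) * 1) * (1 - y)
          - Real.exp (-1 / y) * y * (-1)) / (1 - y) ^ 2) / Shet a b) y :=
      (hQ'.div_const _).congr_of_eventuallyEq hev.symm
    refine ⟨_, _, hP', hP'', ?_⟩
    unfold Qhet
    field_simp
    ring
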